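/- Let k₁, k₂ : I × ℝ → ℝ be the principal curvatures of Φ, i.e. continuous functions satisfying k₁·k₂ = −δ(u)²/w(u,v)⁴ and k₁ + k₂ = −(k(u)v² + δ'(u)v + δ(u)²(k(u)+λ(u)))/w(u,v)³ for all (u,v) ∈ I × ℝ. If the relation δ(u)²·k₁(u,v)³ + k(u)⁴·k₂(u,v) = 0 holds for all (u,v) ∈ I × ℝ, then δ' ≡ 0 and kλ + 1 ≡ 0 on I, i.e. Φ is an Edlinger surface. -/

import Mathlib

/-- Corollary: let `k₁, k₂` be the principal curvatures of `Φ`,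
i.e. continuous functions on `I × ℝ` with `k₁k₂ = K = -δ²/w⁴` and
`k₁ + k₂ = 2H = -(k v² + δ' v + δ²(k+λ))/w³`, where `w u v = √(v² + δ u²)`.
If `δ² k₁³ + k⁴ k₂ = 0` holds identically, then `Φ` is an Edlinger surface,
i.e. `δ' ≡ 0` and `kλ + 1 ≡ 0` on `I`. -/
theorem edlinger_from_principal_curvature_relation
    (I : Set ℝ) (hIopen : IsOpen I) (hIconn : I.OrdConnected)
    (k δ δ' lam : ℝ → ℝ)
    (hk : ContinuousOn k I)
    (hδdiff : ∀ u ∈ I, HasDerivAt δ (δ' u) u)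
    (hδ'cont : ContinuousOn δ' I)
    (hδ0 : ∀ u ∈ I, δ u ≠ 0)
    (hlam : ContinuousOn lam I)
    (k₁ k₂ : ℝ → ℝ → ℝ)
    (hk₁cont : ContinuousOn (fun p : ℝ × ℝ => k₁ p.1 p.2) (I ×ˢ (Set.univ : Set ℝ)))
    (hk₂cont : ContinuousOn (fun p : ℝ × ℝ => k₂ p.1 p.2) (I ×ˢ (Set.univ : Set ℝ)))
    (hprod : ∀ u ∈ I, ∀ v : ℝ,
      k₁ u v * k₂ u v = -(δ u ^ 2) / Real.sqrt (v ^ 2 + δ u ^ 2) ^ 4)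
    (hsum : ∀ u ∈ I, ∀ v : ℝ,
      k₁ u v + k₂ u v =
        -(k u * v ^ 2 + δ' u * v + δ u ^ 2 * (k u + lam u)) /
          Real.sqrt (v ^ 2 + δ u ^ 2) ^ 3)
    (hrel : ∀ u ∈ I, ∀ v : ℝ,
      δ u ^ 2 * k₁ u v ^ 3 + k u ^ 4 * k₂ u v = 0) :
    ∀ u ∈ I, δ' u = 0 ∧ k u * lam u + 1 = 0 := by
  intro u hu
  have hd : δ u ≠ 0 := hδ0 u hu
  -- key polynomial identity
  have key : ∀ v : ℝ,
      (k u)^2 * (k u * v^2 + δ' u * v + δ u ^2 * (k u + lam u))^2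
        = ((k u)^2 * v^2 + δ u ^2 * ((k u)^2 - 1))^2 := by
    intro v
    set w : ℝ := Real.sqrt (v ^ 2 + δ u ^ 2) with hw
    have hvpos : (0:ℝ) < v ^ 2 + δ u ^ 2 := by positivity
    have hwpos : 0 < w := Real.sqrt_pos.mpr hvpos
    have hw2 : w ^ 2 = v ^ 2 + δ u ^ 2 := Real.sq_sqrt hvpos.le
    have hp := hprod u hu v
    have hs := hsum u hu v
    have hr := hrel u hu v
    have hp' : k₁ u v * k₂ u v * w ^ 4 = -(δ u ^ 2) := by
      rw [hp]; field_simp; rw [hw]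
    have hs' : (k₁ u v + k₂ u v) * w ^ 3
        = -(k u * v ^ 2 + δ' u * v + δ u ^ 2 * (k u + lam u)) := by
      rw [hs]; field_simp; rw [hw]
    have hk₁ : k₁ u v ≠ 0 := by
      intro h
      rw [h] at hp'
      simp at hp'
      exact hd (by nlinarith [hp'])
    have e1 : δ u ^ 2 * (k₁ u v * w) ^ 4 = δ u ^ 2 * (k u) ^ 4 := by
      linear_combination (k₁ u v * w ^ 4) * hr - (k u) ^ 4 * hp'
    have e1' : ((k₁ u v * w) ^ 2) ^ 2 = ((k u) ^ 2) ^ 2 := by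
      have := mul_left_cancel₀ (pow_ne_zero 2 hd) e1
      linear_combination this
    have e2 : (k₁ u v * w) ^ 2 = (k u) ^ 2 :=
      (pow_left_inj₀ (sq_nonneg _) (sq_nonneg _) two_ne_zero).mp e1'
    have e3 : (k u)^2 * (v^2 + δ u ^2) - δ u ^2
        = -(k u * v ^ 2 + δ' u * v + δ u ^ 2 * (k u + lam u)) * (k₁ u v * w) := by
      linear_combination (k₁ u v * w) * hs' - hp' - w^2 * e2 - (k u)^2 * hw2
    -- square e3 and use e2
    linear_combination
      (-( (k u)^2 * (v^2 + δ u ^2) - δ u ^2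
        + -(k u * v ^ 2 + δ' u * v + δ u ^ 2 * (k u + lam u)) * (k₁ u v * w))) * e3
      - (k u * v ^ 2 + δ' u * v + δ u ^ 2 * (k u + lam u))^2 * e2
  have hk0 : k u ≠ 0 := by
    intro h
    have h0 := key 0
    rw [h] at h0
    have h4 : δ u ^ 4 = 0 := by linear_combination -h0
    exact hd (by simpa using pow_eq_zero_iff (four_ne_zero (α := ℕ)) |>.mp h4)
  have E0 := key 0
  have E1 := key 1
  have Em := key (-1)
  have E2 := key 2
  have h3 : 2 * (k u)^3 * δ' u = 0 := by
    linear_combination (1/6 : ℝ) * E2 - (1/2 : ℝ) * E1 - (1/6 : ℝ) * Em + (1/2 : ℝ) * E0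
  have hδ' : δ' u = 0 := by
    rcases mul_eq_zero.mp h3 with h | h
    · exact absurd h (mul_ne_zero two_ne_zero (pow_ne_zero _ hk0))
    · exact h
  refine ⟨hδ', ?_⟩
  have h2 : 2 * (k u)^2 * δ u ^2 * (k u * lam u + 1) = 0 := by
    linear_combination (1/2 : ℝ) * E1 + (1/2 : ℝ) * Em - E0 - ((k u)^2 * δ' u) * hδ'
  have hne : 2 * (k u)^2 * δ u ^2 ≠ 0 :=
    mul_ne_zero (mul_ne_zero two_ne_zero (pow_ne_zero _ hk0)) (pow_ne_zero _ hd)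
  rcases mul_eq_zero.mp h2 with h | h
  · exact absurd h hne
  · exact h
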